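/- Let u ∈ (0,1), let x_0, …, x_n be distinct real numbers, let ζ ∈ ℝ, let 0 ≤ k ≤ n and 0 ≤ m ≤ n, and assume (5n−m+3)·u < 1. Suppose: (i) ŵ' = (−1)^{n−m} Σ_{I ⊆ {0,…,n}\{k}, |I| = n−m} (∏_{i∈I} (x_i − ζ))·(1+θ'_I) with each |θ'_I| ≤ γ_{3n−m+1} (the representation obtained by applying the partial-products computation to the shifted points x_j − ζ, each shift being a subtraction with relative error at most u); (ii) ŵ_k = w_k·(1+θ'') with |θ''| ≤ γ_{2n}, where w_k = 1/∏_{j≠k}(x_k − x_j); and (iii) the computed weight is ŵ_{k,m} = m!·ŵ_k·ŵ'·(1+δ₁)(1+δ₂) with |δ₁|, |δ₂| ≤ u. Then there exist real numbers θ_I indexed by the (n−m)-element subsets I of {0,…,n}\{k}, with |θ_I| ≤ γ_{5n−m+3}, such that ŵ_{k,m} = (−1)^{n−m}·m!·w_k·Σ_{I} (∏_{i∈I} (x_i − ζ))·(1+θ_I). -/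

import Mathlib

/-- `γ_k = k·u/(1 − k·u)`, the standard bound for the accumulated relative error of
`k` floating point operations with unit roundoff `u`. -/
noncomputable def gam (u : ℝ) (k : ℕ) : ℝ := k * u / (1 - k * u)


lemma gam_nonneg (u : ℝ) (hu : 0 < u) (p : ℕ) (h : (p : ℝ) * u < 1) : 0 ≤ gam u p :=
  div_nonneg (by positivity) (by linarith)

lemma gam_mul_le (u : ℝ) (hu : 0 < u) (p q : ℕ) (h : ((p : ℝ) + q) * u < 1) :
    (1 + gam u p) * (1 + gam u q) ≤ 1 + gam u (p + q) := by
  have hap : (0:ℝ) ≤ (p:ℝ) * u := by positivity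
  have haq : (0:ℝ) ≤ (q:ℝ) * u := by positivity
  have h1 : (0:ℝ) < 1 - (p:ℝ) * u := by nlinarith
  have h2 : (0:ℝ) < 1 - (q:ℝ) * u := by nlinarith
  have h3 : (0:ℝ) < 1 - ((p:ℝ) + q) * u := by nlinarith
  unfold gam
  push_cast
  have e1 : 1 + (p:ℝ) * u / (1 - (p:ℝ) * u) = 1 / (1 - (p:ℝ) * u) := by field_simp; ring
  have e2 : 1 + (q:ℝ) * u / (1 - (q:ℝ) * u) = 1 / (1 - (q:ℝ) * u) := by field_simp; ring
  have e3 : 1 + ((p:ℝ) + q) * u / (1 - ((p:ℝ) + q) * u) = 1 / (1 - ((p:ℝ) + q) * u) := by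
    field_simp; ring
  rw [e1, e2, e3, div_mul_div_comm, one_mul, div_le_div_iff₀ (by positivity) h3]
  nlinarith

lemma abs_mul_err (u : ℝ) (hu : 0 < u) (p q : ℕ) (h : ((p : ℝ) + q) * u < 1)
    (a b : ℝ) (ha : |a| ≤ gam u p) (hb : |b| ≤ gam u q) :
    |(1 + a) * (1 + b) - 1| ≤ gam u (p + q) := by
  have hap : (0:ℝ) ≤ (p:ℝ) * u := by positivity
  have haq : (0:ℝ) ≤ (q:ℝ) * u := by positivity
  have hgp : 0 ≤ gam u p := gam_nonneg u hu p (by nlinarith)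
  have hgq : 0 ≤ gam u q := gam_nonneg u hu q (by nlinarith)
  have key : (1 + gam u p) * (1 + gam u q) ≤ 1 + gam u (p + q) := gam_mul_le u hu p q h
  have : |(1 + a) * (1 + b) - 1| = |a + b + a * b| := by ring_nf
  rw [this]
  calc |a + b + a * b| ≤ |a| + |b| + |a| * |b| := by
        calc |a + b + a * b| ≤ |a + b| + |a * b| := abs_add_le _ _
        _ ≤ |a| + |b| + |a| * |b| := by rw [abs_mul]; linarith [abs_add_le a b]
    _ ≤ gam u p + gam u q + gam u p * gam u q := by
        have := mul_le_mul ha hb (abs_nonneg b) hgp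
        linarith
    _ ≤ gam u (p + q) := by nlinarith [key]

/-- Rounding error representation for the computed finite difference weight
`ŵ_{k,m} = m!·ŵ_k·ŵ'·(1+δ₁)(1+δ₂)` at the point `ζ`:
`ŵ_{k,m} = (−1)^{n−m} m! w_k Σ_{I} (∏_{i∈I}(x_i−ζ))(1+θ_I)` with `|θ_I| ≤ γ_{5n−m+3}`. -/
theorem stmt_3 (u : ℝ) (hu : 0 < u) (hu1 : u < 1) (n k m : ℕ) (x : ℕ → ℝ) (ζ : ℝ)
    (hx : ∀ i ≤ n, ∀ j ≤ n, i ≠ j → x i ≠ x j)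
    (hk : k ≤ n) (hm : m ≤ n) (hnu : ((5 * n - m + 3 : ℕ) : ℝ) * u < 1)
    (w' wkhat wkmhat : ℝ)
    (hw' : ∃ θ' : Finset ℕ → ℝ,
      (∀ I ∈ ((Finset.range (n + 1)).erase k).powersetCard (n - m),
        |θ' I| ≤ gam u (3 * n - m + 1)) ∧
      w' = (-1 : ℝ) ^ (n - m) *
        ∑ I ∈ ((Finset.range (n + 1)).erase k).powersetCard (n - m),
          (∏ i ∈ I, (x i - ζ)) * (1 + θ' I))
    (hwk : ∃ θ'' : ℝ, |θ''| ≤ gam u (2 * n) ∧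
      wkhat = (1 / ∏ j ∈ (Finset.range (n + 1)).erase k, (x k - x j)) * (1 + θ''))
    (hwkm : ∃ δ₁ δ₂ : ℝ, |δ₁| ≤ u ∧ |δ₂| ≤ u ∧
      wkmhat = (m.factorial : ℝ) * wkhat * w' * (1 + δ₁) * (1 + δ₂)) :
    ∃ θ : Finset ℕ → ℝ,
      (∀ I ∈ ((Finset.range (n + 1)).erase k).powersetCard (n - m),
        |θ I| ≤ gam u (5 * n - m + 3)) ∧
      wkmhat = (-1 : ℝ) ^ (n - m) * (m.factorial : ℝ) *
        (1 / ∏ j ∈ (Finset.range (n + 1)).erase k, (x k - x j)) *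
        ∑ I ∈ ((Finset.range (n + 1)).erase k).powersetCard (n - m),
          (∏ i ∈ I, (x i - ζ)) * (1 + θ I) := by
  obtain ⟨θ', hθ'b, hw'e⟩ := hw'
  obtain ⟨θ'', hθ''b, hwke⟩ := hwk
  obtain ⟨δ₁, δ₂, hδ₁, hδ₂, hwkme⟩ := hwkm
  have hlt : ∀ t : ℕ, t ≤ 5 * n - m + 3 → (t : ℝ) * u < 1 := by
    intro t ht
    exact lt_of_le_of_lt (mul_le_mul_of_nonneg_right (Nat.cast_le.mpr ht) hu.le) hnu
  have hu' : (0:ℝ) < 1 - u := by linarith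
  have hδ₁' : |δ₁| ≤ gam u 1 := by
    refine hδ₁.trans ?_
    unfold gam
    push_cast
    rw [one_mul, le_div_iff₀ hu']
    nlinarith
  have hδ₂' : |δ₂| ≤ gam u 1 := by
    refine hδ₂.trans ?_
    unfold gam
    push_cast
    rw [one_mul, le_div_iff₀ hu']
    nlinarith
  have h2 : ((1:ℝ) + 1) * u < 1 := by
    have := hlt 2 (by omega); push_cast at this; linarith
  have hc : |(1 + δ₁) * (1 + δ₂) - 1| ≤ gam u 2 := abs_mul_err u hu 1 1 (by push_cast; linarith) δ₁ δ₂ hδ₁' hδ₂'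
  have hd : |(1 + θ'') * ((1 + δ₁) * (1 + δ₂)) - 1| ≤ gam u (2 * n + 2) := by
    have h3 : ((2 * n : ℕ) : ℝ) + ((2 : ℕ) : ℝ) = ((2 * n + 2 : ℕ) : ℝ) := by push_cast; ring
    have := abs_mul_err u hu (2 * n) 2 (by
      have := hlt (2 * n + 2) (by omega); push_cast at this ⊢; linarith) θ''
      ((1 + δ₁) * (1 + δ₂) - 1) hθ''b (by simpa using hc)
    simpa using this
  refine ⟨fun I => (1 + θ' I) * ((1 + θ'') * ((1 + δ₁) * (1 + δ₂))) - 1, ?_, ?_⟩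
  · intro I hI
    have key := abs_mul_err u hu (3 * n - m + 1) (2 * n + 2) (by
      have := hlt (5 * n - m + 3) le_rfl
      have he : (3 * n - m + 1) + (2 * n + 2) = 5 * n - m + 3 := by omega
      push_cast [← he] at this ⊢
      linarith) (θ' I) ((1 + θ'') * ((1 + δ₁) * (1 + δ₂)) - 1) (hθ'b I hI) hd
    have he : (3 * n - m + 1) + (2 * n + 2) = 5 * n - m + 3 := by omega
    rw [he] at key
    simpa using key
  · rw [hwkme, hwke, hw'e]
    have hsum : ∑ I ∈ ((Finset.range (n + 1)).erase k).powersetCard (n - m),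
        (∏ i ∈ I, (x i - ζ)) *
          (1 + ((1 + θ' I) * ((1 + θ'') * ((1 + δ₁) * (1 + δ₂))) - 1)) =
        ((1 + θ'') * ((1 + δ₁) * (1 + δ₂))) *
          ∑ I ∈ ((Finset.range (n + 1)).erase k).powersetCard (n - m),
            (∏ i ∈ I, (x i - ζ)) * (1 + θ' I) := by
      rw [Finset.mul_sum]
      exact Finset.sum_congr rfl fun I _ => by ring
    rw [hsum]
    ring
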